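/- Let G be a weighted directed graph, P a path, ε ∈ (0,1), ζ > 0, d > 0, μ_d = εd/(2ζ), and G_d the rounded graph where each edge e of G∖P is replaced by a path of ⌈w(e)/μ_d⌉ edges of weight μ_d. If there is a u-v path in G∖P of total weight d' with d/2 ≤ d' ≤ d and at most ζ edges, then there is a u-v path in G_d of total weight at most d'·(1+ε) and with at most ζ·(1 + 2/ε) edges. -/

import Mathlib

/-!
STATEMENT 11: if there is a `u`-`v` path in `G∖P` of total weight `d'` with `d/2 ≤ d' ≤ d` and
at most `ζ` edges, then the corresponding path in the rounded graph `G_d` (each edge `e`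
subdivided into `⌈w e / μ_d⌉` edges of weight `μ_d`, `μ_d = εd/(2ζ)`) has total weight at most
`d'·(1+ε)` and at most `ζ·(1 + 2/ε)` edges.
-/

variable {V : Type*}

theorem stmt11 (G : V → V → Prop) (Pedge : V → V → Prop) (c : V → V → ℝ)
    (hpos : ∀ a b : V, G a b → 0 < c a b)
    (ε d : ℝ) (hε0 : 0 < ε) (hε1 : ε < 1) (hd : 0 < d)
    (ζ : ℕ) (hζ : 0 < ζ)
    (μ : ℝ) (hμ : μ = ε * d / (2 * ζ))
    -- a `u`-`v` path in `G∖P` with `L ≤ ζ` edges and total weight `d' ∈ [d/2, d]`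
    (u v : V) (L : ℕ) (w : ℕ → V) (hw0 : w 0 = u) (hwL : w L = v)
    (hwalk : ∀ t < L, G (w t) (w (t + 1)) ∧ ¬ Pedge (w t) (w (t + 1)))
    (hL : L ≤ ζ)
    (d' : ℝ) (hd' : d' = ∑ t ∈ Finset.range L, c (w t) (w (t + 1)))
    (hd'lo : d / 2 ≤ d') (hd'hi : d' ≤ d) :
    -- the corresponding path in `G_d`: total weight at most `d'·(1+ε)` …
    (∑ t ∈ Finset.range L, μ * (⌈c (w t) (w (t + 1)) / μ⌉₊ : ℝ)) ≤ d' * (1 + ε) ∧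
    -- … and at most `ζ·(1 + 2/ε)` edges (hops)
    ((∑ t ∈ Finset.range L, ⌈c (w t) (w (t + 1)) / μ⌉₊ : ℕ) : ℝ) ≤ (ζ : ℝ) * (1 + 2 / ε) := by
  have hζR : (0:ℝ) < (ζ : ℝ) := by exact_mod_cast hζ
  have hμ0 : 0 < μ := by
    rw [hμ]; positivity
  have hcpos : ∀ t ∈ Finset.range L, 0 < c (w t) (w (t + 1)) := by
    intro t ht
    exact hpos _ _ (hwalk t (Finset.mem_range.mp ht)).1
  constructor
  · have h1 : (∑ t ∈ Finset.range L, μ * (⌈c (w t) (w (t + 1)) / μ⌉₊ : ℝ))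
        ≤ ∑ t ∈ Finset.range L, (c (w t) (w (t + 1)) + μ) := by
      apply Finset.sum_le_sum
      intro t ht
      have hx : (0:ℝ) ≤ c (w t) (w (t + 1)) / μ := by
        have := (hcpos t ht).le
        positivity
      have := (Nat.ceil_lt_add_one hx).le
      calc μ * (⌈c (w t) (w (t + 1)) / μ⌉₊ : ℝ)
          ≤ μ * (c (w t) (w (t + 1)) / μ + 1) := by
            exact mul_le_mul_of_nonneg_left this hμ0.le
        _ = c (w t) (w (t + 1)) + μ := by field_simp
    rw [Finset.sum_add_distrib, ← hd'] at h1
    have h2 : (L : ℝ) * μ ≤ (ζ : ℝ) * μ := by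
      have : (L:ℝ) ≤ (ζ:ℝ) := by exact_mod_cast hL
      exact mul_le_mul_of_nonneg_right this hμ0.le
    have h3 : (ζ : ℝ) * μ = ε * d / 2 := by
      rw [hμ]; field_simp
    have h4 : ε * d / 2 ≤ ε * d' := by
      have : d / 2 ≤ d' := hd'lo
      nlinarith
    simp only [Finset.sum_const, Finset.card_range, nsmul_eq_mul] at h1
    nlinarith
  · push_cast
    have h1 : (∑ t ∈ Finset.range L, (⌈c (w t) (w (t + 1)) / μ⌉₊ : ℝ))
        ≤ ∑ t ∈ Finset.range L, (c (w t) (w (t + 1)) / μ + 1) := by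
      apply Finset.sum_le_sum
      intro t ht
      have hx : (0:ℝ) ≤ c (w t) (w (t + 1)) / μ := by
        have := (hcpos t ht).le
        positivity
      exact (Nat.ceil_lt_add_one hx).le
    rw [Finset.sum_add_distrib, ← Finset.sum_div, ← hd'] at h1
    simp only [Finset.sum_const, Finset.card_range, nsmul_eq_mul, mul_one] at h1
    have hLζ : (L:ℝ) ≤ (ζ:ℝ) := by exact_mod_cast hL
    have h2' : d' / μ ≤ d / μ := by gcongr
    have h3 : d / μ = 2 * ζ / ε := by
      rw [hμ]; field_simp
    have h4 : (ζ : ℝ) * (1 + 2 / ε) = ζ + 2 * ζ / ε := by field_simp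
    rw [h4]
    calc (∑ t ∈ Finset.range L, (⌈c (w t) (w (t + 1)) / μ⌉₊ : ℝ)) ≤ d' / μ + L := h1
      _ ≤ 2 * ζ / ε + ζ := by rw [← h3]; linarith
      _ = ζ + 2 * ζ / ε := by ring
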